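/- Stability of the Dirichlet problem under perturbation of the coefficients (elliptic error estimate): let λ, Λ > 0 and ℓ < r be real numbers, and let u_ℓ, u_r ∈ ℝ. For measurable functions a, ρ, b on [ℓ, r] with λ ≤ a(x) ≤ Λ, λ ≤ ρ(x) ≤ Λ, |b(x)| ≤ Λ for all x, define h(x) = 2·∫_ℓ^x b(y)/(ρ(y)a(y)) dy, S(x) = ∫_ℓ^x e^{−h(y)}/a(y) dy, and u(x) = u_ℓ + (u_r − u_ℓ)·S(x)/S(r) (the solution of the Dirichlet problem Lu = 0 on (ℓ,r), u(ℓ) = u_ℓ, u(r) = u_r, for the operator with characteristic (a,ρ,b)). Let aⁿ, ρⁿ, bⁿ satisfy the same bounds and define uⁿ analogously. Then there exists a constant C depending only on λ, Λ, ℓ, r such that sup_{x∈[ℓ,r]} |u(x) − uⁿ(x)| ≤ C·|u_r − u_ℓ|·sup_{x∈[ℓ,r]} ( |aⁿ(x) − a(x)| + |ρⁿ(x) − ρ(x)| + |bⁿ(x) − b(x)| ). -/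

import Mathlib

open Set MeasureTheory

/-- `h(x) = 2 ∫_ℓ^x b/(ρ a)`. -/
noncomputable def hFun (ℓ : ℝ) (a ρ b : ℝ → ℝ) (x : ℝ) : ℝ :=
  2 * ∫ y in ℓ..x, b y / (ρ y * a y)

/-- The scale function `S(x) = ∫_ℓ^x e^{-h(y)}/a(y) dy`. -/
noncomputable def SFun (ℓ : ℝ) (a ρ b : ℝ → ℝ) (x : ℝ) : ℝ :=
  ∫ y in ℓ..x, Real.exp (-hFun ℓ a ρ b y) / a y

/-- The solution `u(x) = u_ℓ + (u_r - u_ℓ) S(x)/S(r)` of the Dirichlet problem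
`Lu = 0` on `(ℓ,r)`, `u(ℓ) = u_ℓ`, `u(r) = u_r`. -/
noncomputable def uSol (ℓ r uℓ ur : ℝ) (a ρ b : ℝ → ℝ) (x : ℝ) : ℝ :=
  uℓ + (ur - uℓ) * SFun ℓ a ρ b x / SFun ℓ a ρ b r




/-- A measurable-ish function bounded on `Icc ℓ r` is integrable there. -/
lemma integrableOn_Icc_of_bounded {f : ℝ → ℝ} {ℓ r M : ℝ}
    (hm : AEStronglyMeasurable f (volume.restrict (Icc ℓ r)))
    (hb : ∀ y ∈ Icc ℓ r, |f y| ≤ M) :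
    IntegrableOn f (Icc ℓ r) := by
  refine Integrable.mono' (g := fun _ => M)
    ((integrableOn_const_iff (C := M)).mpr (Or.inr measure_Icc_lt_top)) hm ?_
  filter_upwards [ae_restrict_mem measurableSet_Icc] with y hy
  simpa using hb y hy

lemma intervalIntegrable_of_bounded {f : ℝ → ℝ} {ℓ r M x₁ x₂ : ℝ}
    (hm : AEStronglyMeasurable f (volume.restrict (Icc ℓ r)))
    (hb : ∀ y ∈ Icc ℓ r, |f y| ≤ M)
    (h1 : x₁ ∈ Icc ℓ r) (h2 : x₂ ∈ Icc ℓ r) :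
    IntervalIntegrable f volume x₁ x₂ := by
  rw [intervalIntegrable_iff]
  refine (integrableOn_Icc_of_bounded hm hb).mono_set ?_
  refine (uIoc_subset_uIcc).trans ?_
  rw [uIcc]
  exact Icc_subset_Icc (le_min h1.1 h2.1) (max_le h1.2 h2.2)

lemma exp_lip {u v H : ℝ} (hu : |u| ≤ H) (hv : |v| ≤ H) :
    |Real.exp u - Real.exp v| ≤ Real.exp H * |u - v| := by
  wlog h : v ≤ u generalizing u v
  · rw [abs_sub_comm, abs_sub_comm u v]; exact this hv hu (le_of_not_ge h)
  have h1 : Real.exp u * (1 + (v - u)) ≤ Real.exp v := by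
    have h := Real.add_one_le_exp (v - u)
    calc Real.exp u * (1 + (v - u)) = Real.exp u * ((v - u) + 1) := by ring
      _ ≤ Real.exp u * Real.exp (v - u) := by
          exact mul_le_mul_of_nonneg_left h (Real.exp_nonneg u)
      _ = Real.exp v := by rw [← Real.exp_add]; ring_nf
  have h2 : Real.exp u ≤ Real.exp H := Real.exp_le_exp.mpr (le_of_abs_le hu)
  have h3 : 0 ≤ Real.exp u - Real.exp v := by
    have := Real.exp_le_exp.mpr h; linarith
  rw [abs_of_nonneg h3, abs_of_nonneg (by linarith : (0:ℝ) ≤ u - v)]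
  nlinarith [Real.exp_pos u, h1, h2]

lemma div_div_bound {x y p q lam M : ℝ} (hl : 0 < lam) (hp : lam ≤ p) (hq : lam ≤ q)
    (hy : |y| ≤ M) :
    |x / p - y / q| ≤ |x - y| / lam + M * |p - q| / lam ^ 2 := by
  have hp0 : 0 < p := hl.trans_le hp
  have hq0 : 0 < q := hl.trans_le hq
  have key : x / p - y / q = (x - y) / p + y * (q - p) / (p * q) := by
    field_simp; ring
  have hM : 0 ≤ M := (abs_nonneg y).trans hy
  calc |x / p - y / q| ≤ |(x - y) / p| + |y * (q - p) / (p * q)| := by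
        rw [key]; exact abs_add_le _ _
    _ = |x - y| / p + |y| * |q - p| / (p * q) := by
        rw [abs_div, abs_div, abs_mul, abs_of_pos hp0, abs_of_pos (mul_pos hp0 hq0)]
    _ ≤ |x - y| / lam + M * |p - q| / lam ^ 2 := by
        rw [abs_sub_comm q p]
        gcongr
        nlinarith



lemma integrableOn_Icc_of_bounded' {f : ℝ → ℝ} {ℓ r M : ℝ}
    (hm : AEStronglyMeasurable f (volume.restrict (Icc ℓ r)))
    (hb : ∀ y ∈ Icc ℓ r, |f y| ≤ M) :
    IntegrableOn f (Icc ℓ r) := by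
  refine Integrable.mono' (g := fun _ => M)
    ((integrableOn_const_iff (C := M)).mpr (Or.inr measure_Icc_lt_top)) hm ?_
  filter_upwards [ae_restrict_mem measurableSet_Icc] with y hy
  simpa using hb y hy

lemma intervalIntegrable_of_bounded' {f : ℝ → ℝ} {ℓ r M x₁ x₂ : ℝ}
    (hm : AEStronglyMeasurable f (volume.restrict (Icc ℓ r)))
    (hb : ∀ y ∈ Icc ℓ r, |f y| ≤ M)
    (h1 : x₁ ∈ Icc ℓ r) (h2 : x₂ ∈ Icc ℓ r) :
    IntervalIntegrable f volume x₁ x₂ := by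
  rw [intervalIntegrable_iff]
  refine (integrableOn_Icc_of_bounded' hm hb).mono_set ?_
  refine (uIoc_subset_uIcc).trans ?_
  rw [uIcc]
  exact Icc_subset_Icc (le_min h1.1 h2.1) (max_le h1.2 h2.2)

section pack

variable {lam Lam ℓ r : ℝ} {a ρ b : ℝ → ℝ}

lemma bρa_abs_le (hlam : 0 < lam) (hLam : 0 < Lam)
    (haB : ∀ x ∈ Icc ℓ r, a x ∈ Icc lam Lam) (hρB : ∀ x ∈ Icc ℓ r, ρ x ∈ Icc lam Lam)
    (hbB : ∀ x ∈ Icc ℓ r, |b x| ≤ Lam) :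
    ∀ y ∈ Icc ℓ r, |b y / (ρ y * a y)| ≤ Lam / lam ^ 2 := by
  intro y hy
  have h1 := haB y hy; have h2 := hρB y hy; have h3 := hbB y hy
  rw [abs_div, abs_mul, abs_of_pos (lt_of_lt_of_le hlam h2.1),
    abs_of_pos (lt_of_lt_of_le hlam h1.1)]
  exact div_le_div₀ hLam.le h3 (by positivity) (by nlinarith [h1.1, h2.1])

lemma Ioc_mem_sub {x y : ℝ} (hx : x ∈ Icc ℓ r) (hy : y ∈ Set.uIoc ℓ x) : y ∈ Icc ℓ r := by
  rw [uIoc_of_le hx.1] at hy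
  exact ⟨hy.1.le, hy.2.trans hx.2⟩

lemma hFun_abs_le (hlam : 0 < lam) (hLam : 0 < Lam)
    (haB : ∀ x ∈ Icc ℓ r, a x ∈ Icc lam Lam) (hρB : ∀ x ∈ Icc ℓ r, ρ x ∈ Icc lam Lam)
    (hbB : ∀ x ∈ Icc ℓ r, |b x| ≤ Lam) :
    ∀ x ∈ Icc ℓ r, |hFun ℓ a ρ b x| ≤ 2 * (Lam / lam ^ 2) * (r - ℓ) := by
  intro x hx
  rw [hFun, abs_mul, abs_two]
  have key : ‖∫ y in ℓ..x, b y / (ρ y * a y)‖ ≤ (Lam / lam ^ 2) * |x - ℓ| := by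
    refine intervalIntegral.norm_integral_le_of_norm_le_const ?_
    intro y hy
    simpa only [Real.norm_eq_abs] using bρa_abs_le hlam hLam haB hρB hbB y (Ioc_mem_sub hx hy)
  rw [Real.norm_eq_abs] at key
  have hxl : |x - ℓ| ≤ r - ℓ := by
    rw [abs_of_nonneg (by linarith [hx.1])]; linarith [hx.2]
  have hM : (0:ℝ) ≤ Lam / lam ^ 2 := by positivity
  nlinarith [abs_nonneg (∫ y in ℓ..x, b y / (ρ y * a y))]

lemma hFun_contOn (hlam : 0 < lam) (hLam : 0 < Lam) (hlr : ℓ ≤ r)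
    (ha : Measurable a) (hρ : Measurable ρ) (hb : Measurable b)
    (haB : ∀ x ∈ Icc ℓ r, a x ∈ Icc lam Lam) (hρB : ∀ x ∈ Icc ℓ r, ρ x ∈ Icc lam Lam)
    (hbB : ∀ x ∈ Icc ℓ r, |b x| ≤ Lam) :
    ContinuousOn (hFun ℓ a ρ b) (Icc ℓ r) := by
  have hint : IntegrableOn (fun y => b y / (ρ y * a y)) (Icc ℓ r) :=
    integrableOn_Icc_of_bounded' ((hb.div (hρ.mul ha)).aestronglyMeasurable)
      (bρa_abs_le hlam hLam haB hρB hbB)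
  have := intervalIntegral.continuousOn_primitive_interval
    (a := ℓ) (b := r) (μ := volume) (f := fun y => b y / (ρ y * a y))
    (by rwa [uIcc_of_le hlr])
  rw [uIcc_of_le hlr] at this
  exact continuousOn_const.mul this

lemma Sint_aesm (hlam : 0 < lam) (hLam : 0 < Lam) (hlr : ℓ ≤ r)
    (ha : Measurable a) (hρ : Measurable ρ) (hb : Measurable b)
    (haB : ∀ x ∈ Icc ℓ r, a x ∈ Icc lam Lam) (hρB : ∀ x ∈ Icc ℓ r, ρ x ∈ Icc lam Lam)
    (hbB : ∀ x ∈ Icc ℓ r, |b x| ≤ Lam) :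
    AEStronglyMeasurable (fun y => Real.exp (-hFun ℓ a ρ b y) / a y)
      (volume.restrict (Icc ℓ r)) := by
  have hc : ContinuousOn (fun y => Real.exp (-hFun ℓ a ρ b y)) (Icc ℓ r) :=
    Real.continuous_exp.comp_continuousOn
      (hFun_contOn hlam hLam hlr ha hρ hb haB hρB hbB).neg
  exact ((hc.aemeasurable measurableSet_Icc).div ha.aemeasurable).aestronglyMeasurable

lemma Sint_bounds (hlam : 0 < lam) (hLam : 0 < Lam)
    (haB : ∀ x ∈ Icc ℓ r, a x ∈ Icc lam Lam) (hρB : ∀ x ∈ Icc ℓ r, ρ x ∈ Icc lam Lam)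
    (hbB : ∀ x ∈ Icc ℓ r, |b x| ≤ Lam) :
    ∀ y ∈ Icc ℓ r,
      Real.exp (-(2 * (Lam / lam ^ 2) * (r - ℓ))) / Lam ≤ Real.exp (-hFun ℓ a ρ b y) / a y ∧
      |Real.exp (-hFun ℓ a ρ b y) / a y| ≤ Real.exp (2 * (Lam / lam ^ 2) * (r - ℓ)) / lam := by
  intro y hy
  have hH := hFun_abs_le hlam hLam haB hρB hbB y hy
  have h1 := haB y hy
  have ha0 : 0 < a y := lt_of_lt_of_le hlam h1.1
  have habs := abs_le.mp hH
  constructor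
  · exact div_le_div₀ (Real.exp_pos _).le (Real.exp_le_exp.mpr (by linarith [habs.2])) ha0 h1.2
  · rw [abs_div, abs_of_pos (Real.exp_pos _), abs_of_pos ha0]
    exact div_le_div₀ (Real.exp_pos _).le (Real.exp_le_exp.mpr (by linarith [habs.1])) hlam h1.1

lemma SFun_abs_le (hlam : 0 < lam) (hLam : 0 < Lam)
    (haB : ∀ x ∈ Icc ℓ r, a x ∈ Icc lam Lam) (hρB : ∀ x ∈ Icc ℓ r, ρ x ∈ Icc lam Lam)
    (hbB : ∀ x ∈ Icc ℓ r, |b x| ≤ Lam) :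
    ∀ x ∈ Icc ℓ r, |SFun ℓ a ρ b x| ≤ Real.exp (2 * (Lam / lam ^ 2) * (r - ℓ)) / lam * (r - ℓ) := by
  intro x hx
  have key : ‖∫ y in ℓ..x, Real.exp (-hFun ℓ a ρ b y) / a y‖ ≤
      (Real.exp (2 * (Lam / lam ^ 2) * (r - ℓ)) / lam) * |x - ℓ| := by
    refine intervalIntegral.norm_integral_le_of_norm_le_const ?_
    intro y hy
    simpa only [Real.norm_eq_abs] using
      (Sint_bounds hlam hLam haB hρB hbB y (Ioc_mem_sub hx hy)).2
  rw [Real.norm_eq_abs] at key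
  have hxl : |x - ℓ| ≤ r - ℓ := by
    rw [abs_of_nonneg (by linarith [hx.1])]; linarith [hx.2]
  have hM : (0:ℝ) ≤ Real.exp (2 * (Lam / lam ^ 2) * (r - ℓ)) / lam := by positivity
  calc |SFun ℓ a ρ b x| ≤ (Real.exp (2 * (Lam / lam ^ 2) * (r - ℓ)) / lam) * |x - ℓ| := key
    _ ≤ Real.exp (2 * (Lam / lam ^ 2) * (r - ℓ)) / lam * (r - ℓ) :=
        mul_le_mul_of_nonneg_left hxl hM

lemma SFun_r_lb (hlam : 0 < lam) (hLam : 0 < Lam) (hlr : ℓ ≤ r)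
    (ha : Measurable a) (hρ : Measurable ρ) (hb : Measurable b)
    (haB : ∀ x ∈ Icc ℓ r, a x ∈ Icc lam Lam) (hρB : ∀ x ∈ Icc ℓ r, ρ x ∈ Icc lam Lam)
    (hbB : ∀ x ∈ Icc ℓ r, |b x| ≤ Lam) :
    Real.exp (-(2 * (Lam / lam ^ 2) * (r - ℓ))) / Lam * (r - ℓ) ≤ SFun ℓ a ρ b r := by
  have hint : IntervalIntegrable (fun y => Real.exp (-hFun ℓ a ρ b y) / a y) volume ℓ r :=
    intervalIntegrable_of_bounded' (Sint_aesm hlam hLam hlr ha hρ hb haB hρB hbB)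
      (fun y hy => (Sint_bounds hlam hLam haB hρB hbB y hy).2)
      (left_mem_Icc.mpr hlr) (right_mem_Icc.mpr hlr)
  have := intervalIntegral.integral_mono_on (μ := volume)
    (f := fun _ => Real.exp (-(2 * (Lam / lam ^ 2) * (r - ℓ))) / Lam)
    (g := fun y => Real.exp (-hFun ℓ a ρ b y) / a y) hlr intervalIntegrable_const hint
    (fun y hy => (Sint_bounds hlam hLam haB hρB hbB y hy).1)
  rw [intervalIntegral.integral_const, smul_eq_mul] at this
  rw [SFun]
  linarith [this]

end pack


theorem elliptic_stability
    (lam Lam ℓ r : ℝ) (hlam : 0 < lam) (hLam : 0 < Lam) (hlr : ℓ < r) :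
    ∃ C > (0:ℝ), ∀ uℓ ur : ℝ, ∀ a ρ b an ρn bn : ℝ → ℝ,
      Measurable a → Measurable ρ → Measurable b →
      Measurable an → Measurable ρn → Measurable bn →
      (∀ x ∈ Icc ℓ r, a x ∈ Icc lam Lam) →
      (∀ x ∈ Icc ℓ r, ρ x ∈ Icc lam Lam) →
      (∀ x ∈ Icc ℓ r, |b x| ≤ Lam) →
      (∀ x ∈ Icc ℓ r, an x ∈ Icc lam Lam) →
      (∀ x ∈ Icc ℓ r, ρn x ∈ Icc lam Lam) →
      (∀ x ∈ Icc ℓ r, |bn x| ≤ Lam) →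
      ∀ ε : ℝ,
      (∀ x ∈ Icc ℓ r, |an x - a x| + |ρn x - ρ x| + |bn x - b x| ≤ ε) →
      ∀ x ∈ Icc ℓ r,
        |uSol ℓ r uℓ ur a ρ b x - uSol ℓ r uℓ ur an ρn bn x| ≤
          C * |ur - uℓ| * ε := by
  have hlr' : ℓ ≤ r := hlr.le
  have hT0 : (0:ℝ) < r - ℓ := by linarith
  have hE : (0:ℝ) < Real.exp (2 * (Lam / lam ^ 2) * (r - ℓ)) := Real.exp_pos _
  have hKd : (0:ℝ) < (1 / lam ^ 2 + Lam * (2 * Lam) / (lam ^ 2) ^ 2) := by positivity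
  have hc0 : (0:ℝ) < Real.exp (-(2 * (Lam / lam ^ 2) * (r - ℓ))) / Lam * (r - ℓ) := mul_pos (div_pos (Real.exp_pos _) hLam) hT0
  have hK2 : (0:ℝ) < (Real.exp (2 * (Lam / lam ^ 2) * (r - ℓ)) * (2 * (r - ℓ) * (1 / lam ^ 2 + Lam * (2 * Lam) / (lam ^ 2) ^ 2)) / lam + Real.exp (2 * (Lam / lam ^ 2) * (r - ℓ)) / lam ^ 2) := by
    refine add_pos (div_pos (mul_pos hE ?_) hlam) (div_pos hE (by positivity))
    nlinarith
  have hM1 : (0:ℝ) < Real.exp (2 * (Lam / lam ^ 2) * (r - ℓ)) / lam * (r - ℓ) := mul_pos (div_pos hE hlam) hT0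
  refine ⟨((r - ℓ) * (Real.exp (2 * (Lam / lam ^ 2) * (r - ℓ)) * (2 * (r - ℓ) * (1 / lam ^ 2 + Lam * (2 * Lam) / (lam ^ 2) ^ 2)) / lam + Real.exp (2 * (Lam / lam ^ 2) * (r - ℓ)) / lam ^ 2) / (Real.exp (-(2 * (Lam / lam ^ 2) * (r - ℓ))) / Lam * (r - ℓ)) + Real.exp (2 * (Lam / lam ^ 2) * (r - ℓ)) / lam * (r - ℓ) * ((r - ℓ) * (Real.exp (2 * (Lam / lam ^ 2) * (r - ℓ)) * (2 * (r - ℓ) * (1 / lam ^ 2 + Lam * (2 * Lam) / (lam ^ 2) ^ 2)) / lam + Real.exp (2 * (Lam / lam ^ 2) * (r - ℓ)) / lam ^ 2)) / (Real.exp (-(2 * (Lam / lam ^ 2) * (r - ℓ))) / Lam * (r - ℓ)) ^ 2), ?_, ?_⟩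
  · exact add_pos (div_pos (mul_pos hT0 hK2) hc0)
      (div_pos (mul_pos hM1 (mul_pos hT0 hK2)) (pow_pos hc0 2))
  intro uℓ ur a ρ b an ρn bn ha hρ hb han hρn hbn haB hρB hbB hanB hρnB hbnB ε hε x hx
  -- basic facts about ε
  have hε0 : 0 ≤ ε := by
    have h := hε ℓ (left_mem_Icc.mpr hlr')
    have := abs_nonneg (an ℓ - a ℓ); have := abs_nonneg (ρn ℓ - ρ ℓ)
    have := abs_nonneg (bn ℓ - b ℓ); linarith
  have hda : ∀ y ∈ Icc ℓ r, |a y - an y| ≤ ε := by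
    intro y hy
    have h := hε y hy
    have := abs_nonneg (ρn y - ρ y); have := abs_nonneg (bn y - b y)
    rw [abs_sub_comm]; linarith
  have hdρ : ∀ y ∈ Icc ℓ r, |ρ y - ρn y| ≤ ε := by
    intro y hy
    have h := hε y hy
    have := abs_nonneg (an y - a y); have := abs_nonneg (bn y - b y)
    rw [abs_sub_comm]; linarith
  have hdb : ∀ y ∈ Icc ℓ r, |b y - bn y| ≤ ε := by
    intro y hy
    have h := hε y hy
    have := abs_nonneg (an y - a y); have := abs_nonneg (ρn y - ρ y)
    rw [abs_sub_comm]; linarith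
  -- pointwise bound on difference of the h-integrands
  have hpt : ∀ y ∈ Icc ℓ r,
      |b y / (ρ y * a y) - bn y / (ρn y * an y)| ≤ (1 / lam ^ 2 + Lam * (2 * Lam) / (lam ^ 2) ^ 2) * ε := by
    intro y hy
    have b1 := haB y hy; have b2 := hρB y hy; have b3 := hbB y hy
    have b4 := hanB y hy; have b5 := hρnB y hy; have b6 := hbnB y hy
    have hp : lam ^ 2 ≤ ρ y * a y := by nlinarith [b1.1, b2.1]
    have hq : lam ^ 2 ≤ ρn y * an y := by nlinarith [b4.1, b5.1]
    have key := div_div_bound (x := b y) (y := bn y) (lam := lam ^ 2) (M := Lam) (by positivity : (0:ℝ) < lam ^ 2) hp hq b6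
    have h1 : |b y - bn y| ≤ ε := hdb y hy
    have h2 : |ρ y * a y - ρn y * an y| ≤ 2 * Lam * ε := by
      have e : ρ y * a y - ρn y * an y = ρ y * (a y - an y) + an y * (ρ y - ρn y) := by ring
      have hρa : |ρ y| ≤ Lam := by
        rw [abs_of_pos (lt_of_lt_of_le hlam b2.1)]; exact b2.2
      have han' : |an y| ≤ Lam := by
        rw [abs_of_pos (lt_of_lt_of_le hlam b4.1)]; exact b4.2
      calc |ρ y * a y - ρn y * an y|
          = |ρ y * (a y - an y) + an y * (ρ y - ρn y)| := by rw [e]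
        _ ≤ |ρ y * (a y - an y)| + |an y * (ρ y - ρn y)| := abs_add_le _ _
        _ = |ρ y| * |a y - an y| + |an y| * |ρ y - ρn y| := by rw [abs_mul, abs_mul]
        _ ≤ Lam * ε + Lam * ε :=
            add_le_add (mul_le_mul hρa (hda y hy) (abs_nonneg _) hLam.le)
              (mul_le_mul han' (hdρ y hy) (abs_nonneg _) hLam.le)
        _ = 2 * Lam * ε := by ring
    calc |b y / (ρ y * a y) - bn y / (ρn y * an y)|
        ≤ |b y - bn y| / lam ^ 2 + Lam * |ρ y * a y - ρn y * an y| / (lam ^ 2) ^ 2 := key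
      _ ≤ ε / lam ^ 2 + Lam * (2 * Lam * ε) / (lam ^ 2) ^ 2 := by gcongr
      _ = (1 / lam ^ 2 + Lam * (2 * Lam) / (lam ^ 2) ^ 2) * ε := by ring
  -- bound on |h - hⁿ|
  have hdh : ∀ z ∈ Icc ℓ r,
      |hFun ℓ a ρ b z - hFun ℓ an ρn bn z| ≤ 2 * (r - ℓ) * ((1 / lam ^ 2 + Lam * (2 * Lam) / (lam ^ 2) ^ 2) * ε) := by
    intro z hz
    have hi1 : IntervalIntegrable (fun y => b y / (ρ y * a y)) volume ℓ z :=
      intervalIntegrable_of_bounded' ((hb.div (hρ.mul ha)).aestronglyMeasurable)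
        (bρa_abs_le hlam hLam haB hρB hbB) (left_mem_Icc.mpr hlr') hz
    have hi2 : IntervalIntegrable (fun y => bn y / (ρn y * an y)) volume ℓ z :=
      intervalIntegrable_of_bounded' ((hbn.div (hρn.mul han)).aestronglyMeasurable)
        (bρa_abs_le hlam hLam hanB hρnB hbnB) (left_mem_Icc.mpr hlr') hz
    rw [hFun, hFun, ← mul_sub, abs_mul, abs_two, ← intervalIntegral.integral_sub hi1 hi2]
    have key : ‖∫ y in ℓ..z, (b y / (ρ y * a y) - bn y / (ρn y * an y))‖ ≤
        ((1 / lam ^ 2 + Lam * (2 * Lam) / (lam ^ 2) ^ 2) * ε) * |z - ℓ| := by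
      refine intervalIntegral.norm_integral_le_of_norm_le_const ?_
      intro y hy
      simpa only [Real.norm_eq_abs] using hpt y (Ioc_mem_sub hz hy)
    rw [Real.norm_eq_abs] at key
    have hzl : |z - ℓ| ≤ r - ℓ := by
      rw [abs_of_nonneg (by linarith [hz.1])]; linarith [hz.2]
    have hKdε : (0:ℝ) ≤ (1 / lam ^ 2 + Lam * (2 * Lam) / (lam ^ 2) ^ 2) * ε := mul_nonneg hKd.le hε0
    nlinarith [key, abs_nonneg (∫ y in ℓ..z, (b y / (ρ y * a y) - bn y / (ρn y * an y)))]
  -- h bounds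
  have hH := hFun_abs_le hlam hLam haB hρB hbB
  have hHn := hFun_abs_le hlam hLam hanB hρnB hbnB
  -- pointwise bound on difference of the S-integrands
  have hSpt : ∀ y ∈ Icc ℓ r,
      |Real.exp (-hFun ℓ a ρ b y) / a y - Real.exp (-hFun ℓ an ρn bn y) / an y| ≤
        (Real.exp (2 * (Lam / lam ^ 2) * (r - ℓ)) * (2 * (r - ℓ) * (1 / lam ^ 2 + Lam * (2 * Lam) / (lam ^ 2) ^ 2)) / lam + Real.exp (2 * (Lam / lam ^ 2) * (r - ℓ)) / lam ^ 2) * ε := by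
    intro y hy
    have b1 := haB y hy; have b4 := hanB y hy
    have hhy := hH y hy; have hhny := hHn y hy
    have hel := exp_lip (H := 2 * (Lam / lam ^ 2) * (r - ℓ)) (u := -hFun ℓ a ρ b y) (v := -hFun ℓ an ρn bn y)
      (by rwa [abs_neg]) (by rwa [abs_neg])
    have heq : -hFun ℓ a ρ b y - -hFun ℓ an ρn bn y
        = -(hFun ℓ a ρ b y - hFun ℓ an ρn bn y) := by ring
    rw [heq, abs_neg] at hel
    have hel2 : |Real.exp (-hFun ℓ a ρ b y) - Real.exp (-hFun ℓ an ρn bn y)| ≤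
        Real.exp (2 * (Lam / lam ^ 2) * (r - ℓ)) * (2 * (r - ℓ) * ((1 / lam ^ 2 + Lam * (2 * Lam) / (lam ^ 2) ^ 2) * ε)) := by
      refine hel.trans ?_
      exact mul_le_mul_of_nonneg_left (hdh y hy) hE.le
    have hMn : |Real.exp (-hFun ℓ an ρn bn y)| ≤ Real.exp (2 * (Lam / lam ^ 2) * (r - ℓ)) := by
      rw [abs_of_pos (Real.exp_pos _)]
      exact Real.exp_le_exp.mpr (by linarith [(abs_le.mp hhny).1])
    have key := div_div_bound (lam := lam) (M := Real.exp (2 * (Lam / lam ^ 2) * (r - ℓ))) (x := Real.exp (-hFun ℓ a ρ b y)) (y := Real.exp (-hFun ℓ an ρn bn y)) hlam b1.1 b4.1 hMn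
    calc |Real.exp (-hFun ℓ a ρ b y) / a y - Real.exp (-hFun ℓ an ρn bn y) / an y|
        ≤ |Real.exp (-hFun ℓ a ρ b y) - Real.exp (-hFun ℓ an ρn bn y)| / lam
          + Real.exp (2 * (Lam / lam ^ 2) * (r - ℓ)) * |a y - an y| / lam ^ 2 := key
      _ ≤ (Real.exp (2 * (Lam / lam ^ 2) * (r - ℓ)) * (2 * (r - ℓ) * ((1 / lam ^ 2 + Lam * (2 * Lam) / (lam ^ 2) ^ 2) * ε))) / lam + Real.exp (2 * (Lam / lam ^ 2) * (r - ℓ)) * ε / lam ^ 2 := by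
          gcongr
          exact hda y hy
      _ = (Real.exp (2 * (Lam / lam ^ 2) * (r - ℓ)) * (2 * (r - ℓ) * (1 / lam ^ 2 + Lam * (2 * Lam) / (lam ^ 2) ^ 2)) / lam + Real.exp (2 * (Lam / lam ^ 2) * (r - ℓ)) / lam ^ 2) * ε := by ring
  -- bound on |S - Sⁿ|
  have hSd : ∀ z ∈ Icc ℓ r,
      |SFun ℓ a ρ b z - SFun ℓ an ρn bn z| ≤ (r - ℓ) * ((Real.exp (2 * (Lam / lam ^ 2) * (r - ℓ)) * (2 * (r - ℓ) * (1 / lam ^ 2 + Lam * (2 * Lam) / (lam ^ 2) ^ 2)) / lam + Real.exp (2 * (Lam / lam ^ 2) * (r - ℓ)) / lam ^ 2) * ε) := by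
    intro z hz
    have hi1 : IntervalIntegrable (fun y => Real.exp (-hFun ℓ a ρ b y) / a y) volume ℓ z :=
      intervalIntegrable_of_bounded' (Sint_aesm hlam hLam hlr' ha hρ hb haB hρB hbB)
        (fun y hy => (Sint_bounds hlam hLam haB hρB hbB y hy).2)
        (left_mem_Icc.mpr hlr') hz
    have hi2 : IntervalIntegrable (fun y => Real.exp (-hFun ℓ an ρn bn y) / an y) volume ℓ z :=
      intervalIntegrable_of_bounded' (Sint_aesm hlam hLam hlr' han hρn hbn hanB hρnB hbnB)
        (fun y hy => (Sint_bounds hlam hLam hanB hρnB hbnB y hy).2)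
        (left_mem_Icc.mpr hlr') hz
    rw [SFun, SFun, ← intervalIntegral.integral_sub hi1 hi2]
    have key : ‖∫ y in ℓ..z,
        (Real.exp (-hFun ℓ a ρ b y) / a y - Real.exp (-hFun ℓ an ρn bn y) / an y)‖ ≤
        ((Real.exp (2 * (Lam / lam ^ 2) * (r - ℓ)) * (2 * (r - ℓ) * (1 / lam ^ 2 + Lam * (2 * Lam) / (lam ^ 2) ^ 2)) / lam + Real.exp (2 * (Lam / lam ^ 2) * (r - ℓ)) / lam ^ 2) * ε) * |z - ℓ| := by
      refine intervalIntegral.norm_integral_le_of_norm_le_const ?_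
      intro y hy
      simpa only [Real.norm_eq_abs] using hSpt y (Ioc_mem_sub hz hy)
    rw [Real.norm_eq_abs] at key
    have hzl : |z - ℓ| ≤ r - ℓ := by
      rw [abs_of_nonneg (by linarith [hz.1])]; linarith [hz.2]
    have hK2ε : (0:ℝ) ≤ (Real.exp (2 * (Lam / lam ^ 2) * (r - ℓ)) * (2 * (r - ℓ) * (1 / lam ^ 2 + Lam * (2 * Lam) / (lam ^ 2) ^ 2)) / lam + Real.exp (2 * (Lam / lam ^ 2) * (r - ℓ)) / lam ^ 2) * ε := mul_nonneg hK2.le hε0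
    nlinarith [key]
  -- bounds on S
  have hSr : Real.exp (-(2 * (Lam / lam ^ 2) * (r - ℓ))) / Lam * (r - ℓ) ≤ SFun ℓ a ρ b r := SFun_r_lb hlam hLam hlr' ha hρ hb haB hρB hbB
  have hSnr : Real.exp (-(2 * (Lam / lam ^ 2) * (r - ℓ))) / Lam * (r - ℓ) ≤ SFun ℓ an ρn bn r := SFun_r_lb hlam hLam hlr' han hρn hbn hanB hρnB hbnB
  have hSnx : |SFun ℓ an ρn bn x| ≤ Real.exp (2 * (Lam / lam ^ 2) * (r - ℓ)) / lam * (r - ℓ) := SFun_abs_le hlam hLam hanB hρnB hbnB x hx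
  -- final combination
  have hkey := div_div_bound (lam := Real.exp (-(2 * (Lam / lam ^ 2) * (r - ℓ))) / Lam * (r - ℓ)) (M := Real.exp (2 * (Lam / lam ^ 2) * (r - ℓ)) / lam * (r - ℓ)) (x := SFun ℓ a ρ b x) (y := SFun ℓ an ρn bn x) hc0 hSr hSnr hSnx
  have hfin : |SFun ℓ a ρ b x / SFun ℓ a ρ b r - SFun ℓ an ρn bn x / SFun ℓ an ρn bn r| ≤
      ((r - ℓ) * ((Real.exp (2 * (Lam / lam ^ 2) * (r - ℓ)) * (2 * (r - ℓ) * (1 / lam ^ 2 + Lam * (2 * Lam) / (lam ^ 2) ^ 2)) / lam + Real.exp (2 * (Lam / lam ^ 2) * (r - ℓ)) / lam ^ 2) * ε)) / (Real.exp (-(2 * (Lam / lam ^ 2) * (r - ℓ))) / Lam * (r - ℓ)) + Real.exp (2 * (Lam / lam ^ 2) * (r - ℓ)) / lam * (r - ℓ) * ((r - ℓ) * ((Real.exp (2 * (Lam / lam ^ 2) * (r - ℓ)) * (2 * (r - ℓ) * (1 / lam ^ 2 + Lam * (2 * Lam) / (lam ^ 2) ^ 2)) / lam + Real.exp (2 *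 (Lam / lam ^ 2) * (r - ℓ)) / lam ^ 2) * ε)) / (Real.exp (-(2 * (Lam / lam ^ 2) * (r - ℓ))) / Lam * (r - ℓ)) ^ 2 := by
    refine hkey.trans ?_
    gcongr
    · exact hSd x hx
    · exact hSd r (right_mem_Icc.mpr hlr')
  have hu : uSol ℓ r uℓ ur a ρ b x - uSol ℓ r uℓ ur an ρn bn x =
      (ur - uℓ) * (SFun ℓ a ρ b x / SFun ℓ a ρ b r -
        SFun ℓ an ρn bn x / SFun ℓ an ρn bn r) := by
    simp only [uSol]; ring
  rw [hu, abs_mul]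
  calc |ur - uℓ| * |SFun ℓ a ρ b x / SFun ℓ a ρ b r -
        SFun ℓ an ρn bn x / SFun ℓ an ρn bn r|
      ≤ |ur - uℓ| * (((r - ℓ) * ((Real.exp (2 * (Lam / lam ^ 2) * (r - ℓ)) * (2 * (r - ℓ) * (1 / lam ^ 2 + Lam * (2 * Lam) / (lam ^ 2) ^ 2)) / lam + Real.exp (2 * (Lam / lam ^ 2) * (r - ℓ)) / lam ^ 2) * ε)) / (Real.exp (-(2 * (Lam / lam ^ 2) * (r - ℓ))) / Lam * (r - ℓ)) + Real.exp (2 * (Lam / lam ^ 2) * (r - ℓ)) / lam * (r - ℓ) * ((r - ℓ) * ((Real.exp (2 * (Lam / lam ^ 2) * (r - ℓ)) * (2 * (r - ℓ) * (1 / lam ^ 2 + Lam * (2 * Lam) / (lam ^ 2) ^ 2)) / lam + Real.exp (2 * (Lam / lam ^ 2) * (r - ℓ)) / lam ^ 2) * ε)) / (Real.exp (-(2 * (Lam / lam ^ 2) * (r - ℓ))) / Lam * (r - ℓ)) ^ 2) :=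
        mul_le_mul_of_nonneg_left hfin (abs_nonneg _)
    _ = ((r - ℓ) * (Real.exp (2 * (Lam / lam ^ 2) * (r - ℓ)) * (2 * (r - ℓ) * (1 / lam ^ 2 + Lam * (2 * Lam) / (lam ^ 2) ^ 2)) / lam + Real.exp (2 * (Lam / lam ^ 2) * (r - ℓ)) / lam ^ 2) / (Real.exp (-(2 * (Lam / lam ^ 2) * (r - ℓ))) / Lam * (r - ℓ)) + Real.exp (2 * (Lam / lam ^ 2) * (r - ℓ)) / lam * (r - ℓ) * ((r - ℓ) * (Real.exp (2 * (Lam / lam ^ 2) * (r - ℓ)) * (2 * (r - ℓ) * (1 / lam ^ 2 + Lam * (2 * Lam) / (lam ^ 2) ^ 2)) / lam + Real.exp (2 * (Lam / lam ^ 2) * (r - ℓ)) / lam ^ 2)) / (Real.exp (-(2 * (Lam / lam ^ 2) * (r - ℓ))) / Lam * (r - ℓ)) ^ 2) * |ur - uℓ| * ε := by ring
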